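/- Let R ≥ T̄ = (1+ε)T. If MILP(R) has an integral feasible solution, then the instance admits a schedule with makespan at most R + ε²T. -/

import Mathlib

open Finset
open scoped Classical ENNReal

noncomputable section

variable {J : Type*} [Fintype J] {K : ℕ}

/-- The set `B_t` of finite big processing-time values occurring for machine type `t`. -/
def bigSet (ε T : ℝ) (p : Fin K → J → ℝ≥0∞) (t : Fin K) : Finset ℝ≥0∞ :=
  (Finset.univ.image (p t)).filter fun v => ENNReal.ofReal (ε ^ 2 * T) < v ∧ v ≠ ⊤

/-- The set `S_t` of small processing-time values occurring for machine type `t`. -/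
def smallSet (ε T : ℝ) (p : Fin K → J → ℝ≥0∞) (t : Fin K) : Finset ℝ≥0∞ :=
  (Finset.univ.image (p t)).filter fun v => v ≤ ENNReal.ofReal (ε ^ 2 * T)

/-- The size of a configuration `C` for the set of big values `B`. -/
def confSize (B : Finset ℝ≥0∞) (C : ℝ≥0∞ → ℕ) : ℝ≥0∞ := ∑ v ∈ B, (C v : ℝ≥0∞) * v

/-- `C` is a configuration for the set of big values `B`: it is supported on `B` and has
size at most `T̄ = (1+ε)T`. -/
def IsConf (ε T : ℝ) (B : Finset ℝ≥0∞) (C : ℝ≥0∞ → ℕ) : Prop :=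
  (∀ v ∉ B, C v = 0) ∧ confSize B C ≤ ENNReal.ofReal ((1 + ε) * T)

/-- Feasibility of the (relaxed) MILP(R): `z` are the configuration variables (supported
on the configurations for each type), `x` the fractional job-assignment variables
(vanishing when the processing time exceeds `T̄ = (1+ε)T`), subject to the constraints
(1)-(4) of the paper. -/
def MILPFeasible (ε T : ℝ) (p : Fin K → J → ℝ≥0∞) (m : Fin K → ℕ) (R : ℝ)
    (z : (ℝ≥0∞ → ℕ) → Fin K → ℝ≥0∞) (x : J → Fin K → ℝ≥0∞) : Prop :=
  (∀ C t, ¬ IsConf ε T (bigSet ε T p t) C → z C t = 0) ∧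
  (∀ j t, ENNReal.ofReal ((1 + ε) * T) < p t j → x j t = 0) ∧
  (∀ t, ∑' C : ℝ≥0∞ → ℕ, z C t = m t) ∧
  (∀ j, ∑ t, x j t = 1) ∧
  (∀ t, ∀ v ∈ bigSet ε T p t,
    ∑ j ∈ Finset.univ.filter (fun j => p t j = v), x j t ≤
      ∑' C : ℝ≥0∞ → ℕ, (C v : ℝ≥0∞) * z C t) ∧
  (∀ t, (∑' C : ℝ≥0∞ → ℕ, confSize (bigSet ε T p t) C * z C t) +
      ∑ v ∈ smallSet ε T p t, v * ∑ j ∈ Finset.univ.filter (fun j => p t j = v), x j t ≤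
      (m t : ℝ≥0∞) * ENNReal.ofReal R)

/-- The machines: `m t` machines of each type `t`. -/
def Machine (m : Fin K → ℕ) : Type := Σ t : Fin K, Fin (m t)

/-- The load of machine `i` under schedule `σ`. -/
def load (p : Fin K → J → ℝ≥0∞) (m : Fin K → ℕ) (σ : J → Machine m) (i : Machine m) :
    ℝ≥0∞ :=
  ∑ j ∈ Finset.univ.filter (fun j => σ j = i), p i.1 j

lemma exists_injOn_finset {α β : Type*} [Nonempty β] (s : Finset α) (t : Finset β)
    (h : s.card ≤ t.card) : ∃ f : α → β, (∀ a ∈ s, f a ∈ t) ∧ Set.InjOn f s := by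
  classical
  refine ⟨fun a => if ha : a ∈ s then (t.equivFin.symm (Fin.castLE h (s.equivFin ⟨a, ha⟩)) : β)
    else Classical.arbitrary β, ?_, ?_⟩
  · intro a ha
    simp only [dif_pos ha]
    exact (t.equivFin.symm _).2
  · intro a ha b hb hab
    have ha' : a ∈ s := ha
    have hb' : b ∈ s := hb
    simp only [dif_pos ha', dif_pos hb'] at hab
    have := t.equivFin.symm.injective (Subtype.ext hab)
    have := Fin.castLE_injective h this
    have := s.equivFin.injective this
    exact Subtype.ext_iff.mp this

lemma finsupp_of_tsum_nat {ι : Type*} (g : ι → ℕ) (n : ℕ) (h : ∑' i, (g i : ℝ≥0∞) = n) :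
    ∃ s : Finset ι, (∀ i ∉ s, g i = 0) ∧ ∑ i ∈ s, g i = n := by
  classical
  have hfin : (Function.support g).Finite := by
    by_contra hinf
    obtain ⟨F, hFsub, hFcard⟩ := (Set.Infinite.exists_subset_card_eq hinf (n + 1))
    have h1 : (↑(n + 1) : ℝ≥0∞) ≤ ∑ i ∈ F, (g i : ℝ≥0∞) := by
      rw [← hFcard]
      calc (F.card : ℝ≥0∞) = ∑ _i ∈ F, 1 := by simp
        _ ≤ ∑ i ∈ F, (g i : ℝ≥0∞) := by
          refine Finset.sum_le_sum fun i hi => ?_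
          have : g i ≠ 0 := hFsub hi
          exact_mod_cast Nat.one_le_iff_ne_zero.mpr this
    have h2 : ∑ i ∈ F, (g i : ℝ≥0∞) ≤ ∑' i, (g i : ℝ≥0∞) := ENNReal.sum_le_tsum F
    rw [h] at h2
    have : (n + 1 : ℕ) ≤ n := by exact_mod_cast h1.trans h2
    omega
  refine ⟨hfin.toFinset, fun i hi => ?_, ?_⟩
  · by_contra h'
    exact hi (hfin.mem_toFinset.mpr h')
  · have := (tsum_eq_sum (s := hfin.toFinset)
      (f := fun i => (g i : ℝ≥0∞)) ?_).symm.trans h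
    · exact_mod_cast this
    · intro b hb
      simp only [Set.Finite.mem_toFinset, Function.mem_support, not_not] at hb
      simp [hb]

lemma conf_assign {ι : Type*} (s : Finset ι) (g : ι → ℕ) (n : ℕ) (h : ∑ i ∈ s, g i = n) :
    ∃ conf : Fin n → ι, (∀ i, 0 < g (conf i) ∧ conf i ∈ s) ∧
      ∀ F : ι → ℝ≥0∞, ∑ i, F (conf i) = ∑ C ∈ s, (g C : ℝ≥0∞) * F C := by
  classical
  have hcard : Fintype.card (Σ C : {C // C ∈ s}, Fin (g C.1)) = n := by
    rw [Fintype.card_sigma]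
    simp only [Fintype.card_fin]
    rw [← h]
    exact Finset.sum_coe_sort s g
  let e := Fintype.equivFinOfCardEq hcard
  refine ⟨fun i => (e.symm i).1.1, fun i => ⟨(e.symm i).2.pos, (e.symm i).1.2⟩, fun F => ?_⟩
  calc ∑ i, F ((e.symm i).1.1) = ∑ σ : Σ C : {C // C ∈ s}, Fin (g C.1), F σ.1.1 :=
        (Fintype.sum_equiv e (fun σ => F σ.1.1) _ (fun σ => by simp)).symm
    _ = ∑ C : {C // C ∈ s}, ∑ _x : Fin (g C.1), F C.1 := by
        rw [← Finset.univ_sigma_univ, Finset.sum_sigma]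
    _ = ∑ C : {C // C ∈ s}, (g C.1 : ℝ≥0∞) * F C.1 := by
        refine Fintype.sum_congr _ _ fun C => ?_
        simp [Finset.sum_const, nsmul_eq_mul]
    _ = ∑ C ∈ s, (g C : ℝ≥0∞) * F C := by
        rw [Finset.univ_eq_attach]
        exact Finset.sum_attach s (fun C => (g C : ℝ≥0∞) * F C)

lemma greedy {α : Type*} (q : α → ℝ≥0∞) (n : ℕ) (hn : 0 < n) (Rb c : ℝ≥0∞) (hRb : Rb ≠ ⊤)
    (S : Finset α) (ℓ : Fin n → ℝ≥0∞) (hℓ : ∀ i, ℓ i ≤ Rb + c)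
    (hsm : ∀ j ∈ S, q j ≤ c) (hnz : ∀ j ∈ S, q j ≠ 0)
    (hsum : (∑ i, ℓ i) + ∑ j ∈ S, q j ≤ n * Rb) :
    ∃ f : α → Fin n, ∀ i, ℓ i + ∑ j ∈ S.filter (fun j => f j = i), q j ≤ Rb + c := by
  classical
  induction S using Finset.induction generalizing ℓ with
  | empty =>
      exact ⟨fun _ => ⟨0, hn⟩, fun i => by simpa using hℓ i⟩
  | @insert a S ha IH =>
      have hnRb : (n : ℝ≥0∞) * Rb ≠ ⊤ := ENNReal.mul_ne_top (by simp) hRb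
      have hqa : q a ≠ 0 := hnz a (mem_insert_self a S)
      have hex : ∃ i₀ : Fin n, ℓ i₀ ≤ Rb := by
        by_contra hco
        push_neg at hco
        have h1 : (n : ℝ≥0∞) * Rb ≤ ∑ i, ℓ i := by
          calc (n : ℝ≥0∞) * Rb = ∑ _i : Fin n, Rb := by simp [Finset.sum_const, nsmul_eq_mul]
            _ ≤ ∑ i, ℓ i := Finset.sum_le_sum fun i _ => (hco i).le
        have h2 : (∑ i, ℓ i) + q a ≤ (n : ℝ≥0∞) * Rb := by
          calc (∑ i, ℓ i) + q a ≤ (∑ i, ℓ i) + ∑ j ∈ insert a S, q j := by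
                gcongr
                exact Finset.single_le_sum (f := q) (fun j _ => zero_le) (mem_insert_self a S)
            _ ≤ n * Rb := hsum
        have h3 : (n : ℝ≥0∞) * Rb + q a ≤ (n : ℝ≥0∞) * Rb + 0 := by
          rw [add_zero]
          exact le_trans (add_le_add h1 le_rfl) h2
        exact hqa (le_zero_iff.mp ((ENNReal.add_le_add_iff_left hnRb).mp h3))
      obtain ⟨i₀, hi₀⟩ := hex
      have hqac : q a ≤ c := hsm a (mem_insert_self a S)
      have hsum' : ∑ i, Function.update ℓ i₀ (ℓ i₀ + q a) i = (∑ i, ℓ i) + q a := by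
        rw [Finset.sum_update_of_mem (Finset.mem_univ i₀), Finset.sdiff_singleton_eq_erase,
          ← Finset.add_sum_erase _ ℓ (Finset.mem_univ i₀)]
        ring
      obtain ⟨f, hf⟩ := IH (Function.update ℓ i₀ (ℓ i₀ + q a))
        (fun i => by
          rcases eq_or_ne i i₀ with rfl | hne
          · rw [Function.update_self]
            exact add_le_add hi₀ hqac
          · rw [Function.update_of_ne hne]
            exact hℓ i)
        (fun j hj => hsm j (mem_insert_of_mem hj))
        (fun j hj => hnz j (mem_insert_of_mem hj))
        (by rw [hsum']
            calc (∑ i, ℓ i) + q a + ∑ j ∈ S, q j = (∑ i, ℓ i) + ∑ j ∈ insert a S, q j := by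
                  rw [Finset.sum_insert ha]; ring
              _ ≤ n * Rb := hsum)
      refine ⟨Function.update f a i₀, fun i => ?_⟩
      have hfilter : ∀ (i' : Fin n), S.filter (fun j => Function.update f a i₀ j = i')
          = S.filter (fun j => f j = i') := by
        intro i'
        refine Finset.filter_congr fun j hj => ?_
        rw [Function.update_of_ne (by rintro rfl; exact ha hj)]
      rcases eq_or_ne i i₀ with rfl | hne
      · have heq : (insert a S).filter (fun j => Function.update f a i j = i)
            = insert a (S.filter (fun j => f j = i)) := by
          rw [Finset.filter_insert, if_pos (by rw [Function.update_self])]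
          rw [hfilter]
        rw [heq, Finset.sum_insert (fun h => ha (Finset.mem_of_mem_filter a h))]
        have := hf i
        rw [Function.update_self] at this
        calc ℓ i + (q a + ∑ j ∈ S.filter (fun j => f j = i), q j)
            = ℓ i + q a + ∑ j ∈ S.filter (fun j => f j = i), q j := by ring
          _ ≤ Rb + c := this
      · have heq : (insert a S).filter (fun j => Function.update f a i₀ j = i)
            = S.filter (fun j => f j = i) := by
          rw [Finset.filter_insert, if_neg (by rw [Function.update_self]; exact fun h => hne h.symm)]
          rw [hfilter]
        rw [heq]
        have := hf i
        rwa [Function.update_of_ne hne] at this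

/-- An integral feasible solution of MILP(R) with `R ≥ T̄ = (1+ε)T`
yields a schedule with makespan at most `R + ε²T`. -/
theorem MILP_to_schedule (ε T R : ℝ) (hε : 0 < ε) (hε1 : ε ≤ 1) (hT : 0 < T)
    (hR : (1 + ε) * T ≤ R)
    (p : Fin K → J → ℝ≥0∞) (hp : ∀ t j, p t j ≠ 0) (m : Fin K → ℕ)
    (hMILP : ∃ z x, MILPFeasible ε T p m R z x ∧
      (∀ C t, ∃ n : ℕ, z C t = n) ∧ (∀ j t, ∃ n : ℕ, x j t = n)) :
    ∃ σ : J → Machine m, ∀ i, load p m σ i ≤ ENNReal.ofReal (R + ε ^ 2 * T) := by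
  obtain ⟨z, x, ⟨hz0, hx0, hz1, hx1, h5, h6⟩, hzInt, hxInt⟩ := hMILP
  choose nz hnz using hzInt
  have hRpos : 0 < R := lt_of_lt_of_le (by positivity) hR
  have hε2T : 0 ≤ ε ^ 2 * T := by positivity
  -- each job has a type with nonzero x
  have hτex : ∀ j, ∃ t, x j t ≠ 0 := by
    intro j
    by_contra hco
    push_neg at hco
    have := hx1 j
    rw [Finset.sum_eq_zero (fun t _ => hco t)] at this
    exact one_ne_zero this.symm
  choose τ hτ using hτex
  have hx1' : ∀ j t, τ j = t → (1 : ℝ≥0∞) ≤ x j t := by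
    intro j t h
    subst h
    obtain ⟨n, hn⟩ := hxInt j (τ j)
    have h' := hτ j
    rw [hn] at h' ⊢
    exact_mod_cast Nat.one_le_iff_ne_zero.mpr (by exact_mod_cast h')
  have hple : ∀ j, p (τ j) j ≤ ENNReal.ofReal ((1 + ε) * T) := by
    intro j
    by_contra h
    exact hτ j (hx0 j (τ j) (lt_of_not_ge h))
  -- if a job is assigned to type t, then m t > 0
  have hmpos : ∀ j, 0 < m (τ j) := by
    intro j
    by_contra hco
    have hm0 : m (τ j) = 0 := by omega
    have hzz : ∀ C, z C (τ j) = 0 := by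
      have := hz1 (τ j)
      rw [hm0] at this
      simp only [Nat.cast_zero] at this
      exact ENNReal.tsum_eq_zero.mp this
    have hle := hple j
    rcases le_or_gt (p (τ j) j) (ENNReal.ofReal (ε ^ 2 * T)) with hsmall | hbig
    · -- small job: contradiction with constraint (4)
      have hv : p (τ j) j ∈ smallSet ε T p (τ j) := by
        rw [smallSet, Finset.mem_filter]
        exact ⟨Finset.mem_image_of_mem _ (Finset.mem_univ j), hsmall⟩
      have h6' := h6 (τ j)
      rw [hm0] at h6'
      simp only [Nat.cast_zero, zero_mul, le_zero_iff, add_eq_zero] at h6'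
      have hterm := (Finset.sum_eq_zero_iff.mp h6'.2) _ hv
      rcases mul_eq_zero.mp hterm with h' | h'
      · exact hp (τ j) j h'
      · have := (Finset.sum_eq_zero_iff.mp h') j
          (Finset.mem_filter.mpr ⟨Finset.mem_univ j, rfl⟩)
        exact hτ j this
    · -- big job: contradiction with constraint (3)
      have hv : p (τ j) j ∈ bigSet ε T p (τ j) := by
        rw [bigSet, Finset.mem_filter]
        exact ⟨Finset.mem_image_of_mem _ (Finset.mem_univ j),
          hbig, (lt_of_le_of_lt hle ENNReal.ofReal_lt_top).ne⟩
      have h5' := h5 (τ j) _ hv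
      have : ∑' C : ℝ≥0∞ → ℕ, ((C (p (τ j) j) : ℝ≥0∞)) * z C (τ j) = 0 := by
        simp [hzz]
      rw [this, le_zero_iff] at h5'
      have := (Finset.sum_eq_zero_iff.mp h5') j
        (Finset.mem_filter.mpr ⟨Finset.mem_univ j, rfl⟩)
      exact hτ j this
  -- per-type scheduling
  have keyT : ∀ t, 0 < m t → ∃ g : J → Fin (m t), ∀ i : Fin (m t),
      ∑ j ∈ Finset.univ.filter (fun j => τ j = t ∧ g j = i), p t j
        ≤ ENNReal.ofReal (R + ε ^ 2 * T) := by
    intro t ht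
    obtain ⟨s, hs0, hssum⟩ := finsupp_of_tsum_nat (fun C => nz C t) (m t) (by
      have := hz1 t
      simp_rw [hnz] at this
      exact this)
    obtain ⟨conf, hconf1, hconf2⟩ := conf_assign s (fun C => nz C t) (m t) hssum
    have hIsConf : ∀ i, IsConf ε T (bigSet ε T p t) (conf i) := by
      intro i
      by_contra h
      have h' := hz0 (conf i) t h
      rw [hnz] at h'
      have h'' : nz (conf i) t = 0 := by exact_mod_cast h'
      exact (hconf1 i).1.ne' h''
    -- tsum over configurations reduces to the machine sum
    have tsum_form : ∀ F : (ℝ≥0∞ → ℕ) → ℝ≥0∞,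
        ∑' C : ℝ≥0∞ → ℕ, F C * z C t = ∑ i, F (conf i) := by
      intro F
      rw [tsum_eq_sum (s := s) (fun C hC => by rw [hnz, hs0 C hC]; simp)]
      rw [hconf2 F]
      exact Finset.sum_congr rfl fun C _ => by rw [hnz]; ring
    set Big : Finset J :=
      Finset.univ.filter (fun j => τ j = t ∧ ENNReal.ofReal (ε ^ 2 * T) < p t j) with hBdef
    set Small : Finset J :=
      Finset.univ.filter (fun j => τ j = t ∧ p t j ≤ ENNReal.ofReal (ε ^ 2 * T)) with hSdef
    have hBigMem : ∀ j ∈ Big, p t j ∈ bigSet ε T p t := by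
      intro j hj
      rw [hBdef, Finset.mem_filter] at hj
      rw [bigSet, Finset.mem_filter]
      refine ⟨Finset.mem_image_of_mem _ (Finset.mem_univ j), hj.2.2, ?_⟩
      have := hple j
      rw [hj.2.1] at this
      exact (lt_of_le_of_lt this ENNReal.ofReal_lt_top).ne
    have hSmallMem : ∀ j ∈ Small, p t j ∈ smallSet ε T p t := by
      intro j hj
      rw [hSdef, Finset.mem_filter] at hj
      rw [smallSet, Finset.mem_filter]
      exact ⟨Finset.mem_image_of_mem _ (Finset.mem_univ j), hj.2.2⟩
    -- number of big jobs of each value vs capacity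
    have hcount_le : ∀ v, ∀ S' : Finset J, S' ⊆ Finset.univ.filter (fun j => τ j = t ∧ p t j = v) →
        (S'.card : ℝ≥0∞) ≤ ∑ j ∈ Finset.univ.filter (fun j => p t j = v), x j t := by
      intro v S' hsub
      calc (S'.card : ℝ≥0∞) = ∑ _j ∈ S', 1 := by simp
        _ ≤ ∑ j ∈ S', x j t := Finset.sum_le_sum fun j hj =>
            hx1' j t (Finset.mem_filter.mp (hsub hj)).2.1
        _ ≤ ∑ j ∈ Finset.univ.filter (fun j => p t j = v), x j t := by
            refine Finset.sum_le_sum_of_subset fun j hj => ?_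
            exact Finset.mem_filter.mpr ⟨Finset.mem_univ j,
              (Finset.mem_filter.mp (hsub hj)).2.2⟩
    have hcap : ∀ v ∈ bigSet ε T p t,
        (Big.filter (fun j => p t j = v)).card ≤ ∑ i, conf i v := by
      intro v hv
      have hc : ((Big.filter (fun j => p t j = v)).card : ℝ≥0∞)
          ≤ ((∑ i, conf i v : ℕ) : ℝ≥0∞) := by
        push_cast
        calc ((Big.filter (fun j => p t j = v)).card : ℝ≥0∞)
            ≤ ∑ j ∈ Finset.univ.filter (fun j => p t j = v), x j t := by
              refine hcount_le v _ fun j hj => ?_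
              rw [Finset.mem_filter] at hj ⊢
              rw [hBdef, Finset.mem_filter] at hj
              exact ⟨Finset.mem_univ j, hj.1.2.1, hj.2⟩
          _ ≤ ∑' C : ℝ≥0∞ → ℕ, ((C v : ℝ≥0∞)) * z C t := h5 t v hv
          _ = ∑ i, ((conf i v : ℝ≥0∞)) := tsum_form (fun C => (C v : ℝ≥0∞))
      exact_mod_cast hc
    -- choose assignment of big jobs of each value into configuration slots
    have hNE : Nonempty ((_ : Fin (m t)) × ℕ) := ⟨⟨⟨0, ht⟩, 0⟩⟩
    have hfvex : ∀ v : ℝ≥0∞, ∃ fv : J → (_ : Fin (m t)) × ℕ, v ∈ bigSet ε T p t →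
        ((∀ j ∈ Big.filter (fun j => p t j = v),
          fv j ∈ (Finset.univ : Finset (Fin (m t))).sigma (fun i => Finset.range (conf i v))) ∧
         Set.InjOn fv (Big.filter (fun j => p t j = v))) := by
      intro v
      by_cases hv : v ∈ bigSet ε T p t
      · obtain ⟨f, hmem, hinj⟩ := exists_injOn_finset (Big.filter (fun j => p t j = v))
          ((Finset.univ : Finset (Fin (m t))).sigma (fun i => Finset.range (conf i v)))
          (by rw [Finset.card_sigma]
              simpa [Finset.card_range] using hcap v hv)
        exact ⟨f, fun _ => ⟨hmem, hinj⟩⟩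
      · exact ⟨fun _ => Classical.arbitrary _, fun h => absurd h hv⟩
    choose fv hfv using hfvex
    set bmap : J → Fin (m t) := fun j => (fv (p t j) j).1 with hbmapdef
    -- machine capacity bound per value
    have hcount : ∀ (i : Fin (m t)), ∀ v ∈ bigSet ε T p t,
        ((Big.filter (fun j => bmap j = i)).filter (fun j => p t j = v)).card ≤ conf i v := by
      intro i v hv
      obtain ⟨hmem, hinj⟩ := hfv v hv
      have := Finset.card_le_card_of_injOn
        (s := (Big.filter (fun j => bmap j = i)).filter (fun j => p t j = v))
        (t := Finset.range (conf i v)) (fun j => (fv v j).2) ?_ ?_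
      · simpa [Finset.card_range] using this
      · intro j hj
        rw [Finset.mem_coe, Finset.mem_filter, Finset.mem_filter] at hj
        obtain ⟨⟨hjB, hji⟩, hjv⟩ := hj
        have hj' : j ∈ Big.filter (fun j => p t j = v) :=
          Finset.mem_filter.mpr ⟨hjB, hjv⟩
        have h1 := hmem j hj'
        rw [Finset.mem_sigma] at h1
        have hfst : (fv v j).1 = i := by
          rw [hbmapdef] at hji
          simp only at hji
          rw [hjv] at hji
          exact hji
        rw [← hfst]
        exact h1.2
      · intro j1 hj1 j2 hj2 he
        have hj1' : j1 ∈ (Big.filter (fun j => bmap j = i)).filter (fun j => p t j = v) := hj1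
        have hj2' : j2 ∈ (Big.filter (fun j => bmap j = i)).filter (fun j => p t j = v) := hj2
        rw [Finset.mem_filter, Finset.mem_filter] at hj1' hj2'
        have m1 : j1 ∈ Big.filter (fun j => p t j = v) :=
          Finset.mem_filter.mpr ⟨hj1'.1.1, hj1'.2⟩
        have m2 : j2 ∈ Big.filter (fun j => p t j = v) :=
          Finset.mem_filter.mpr ⟨hj2'.1.1, hj2'.2⟩
        have f1 : (fv v j1).1 = i := by
          have hh := hj1'.1.2
          rw [hbmapdef] at hh
          simp only at hh
          rwa [hj1'.2] at hh
        have f2 : (fv v j2).1 = i := by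
          have hh := hj2'.1.2
          rw [hbmapdef] at hh
          simp only at hh
          rwa [hj2'.2] at hh
        refine hinj m1 m2 (Sigma.ext (f1.trans f2.symm) (heq_of_eq ?_))
        exact he
    -- load of big jobs on each machine
    set bigload : Fin (m t) → ℝ≥0∞ :=
      fun i => ∑ j ∈ Big.filter (fun j => bmap j = i), p t j with hbldef
    have hbigload : ∀ i, bigload i ≤ confSize (bigSet ε T p t) (conf i) := by
      intro i
      rw [hbldef]
      simp only
      rw [← Finset.sum_fiberwise_of_maps_to (g := p t) (t := bigSet ε T p t)
        (fun j hj => hBigMem j (Finset.mem_of_mem_filter j hj)) (f := fun j => p t j)]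
      rw [confSize]
      refine Finset.sum_le_sum fun v hv => ?_
      have hconst : ∑ j ∈ (Big.filter (fun j => bmap j = i)).filter (fun j => p t j = v), p t j
          = (((Big.filter (fun j => bmap j = i)).filter (fun j => p t j = v)).card : ℝ≥0∞) * v := by
        rw [Finset.sum_congr rfl (fun j hj => (Finset.mem_filter.mp hj).2)]
        simp [Finset.sum_const, nsmul_eq_mul]
      rw [hconst]
      exact mul_le_mul_left (by exact_mod_cast hcount i v hv) v
    have hbigloadR : ∀ i, bigload i ≤ ENNReal.ofReal R := fun i =>
      (hbigload i).trans ((hIsConf i).2.trans (ENNReal.ofReal_le_ofReal hR))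
    -- total load bound
    have hsumbound : (∑ i, bigload i) + ∑ j ∈ Small, p t j
        ≤ (m t : ℝ≥0∞) * ENNReal.ofReal R := by
      refine le_trans (add_le_add ?_ ?_) (h6 t)
      · rw [tsum_form (fun C => confSize (bigSet ε T p t) C)]
        exact Finset.sum_le_sum fun i _ => hbigload i
      · rw [← Finset.sum_fiberwise_of_maps_to (g := p t) (t := smallSet ε T p t)
          hSmallMem (f := fun j => p t j)]
        refine Finset.sum_le_sum fun v hv => ?_
        have hconst : ∑ j ∈ Small.filter (fun j => p t j = v), p t j
            = ((Small.filter (fun j => p t j = v)).card : ℝ≥0∞) * v := by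
          rw [Finset.sum_congr rfl (fun j hj => (Finset.mem_filter.mp hj).2)]
          simp [Finset.sum_const, nsmul_eq_mul]
        rw [hconst, mul_comm]
        refine mul_le_mul_right ?_ v
        refine hcount_le v _ fun j hj => ?_
        rw [Finset.mem_filter] at hj ⊢
        rw [hSdef, Finset.mem_filter] at hj
        exact ⟨Finset.mem_univ j, hj.1.2.1, hj.2⟩
    -- greedily schedule the small jobs
    obtain ⟨f, hf⟩ := greedy (p t) (m t) ht (ENNReal.ofReal R) (ENNReal.ofReal (ε ^ 2 * T))
      ENNReal.ofReal_ne_top Small bigload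
      (fun i => le_trans (hbigloadR i) le_self_add)
      (fun j hj => by
        rw [hSdef, Finset.mem_filter] at hj
        exact hj.2.2)
      (fun j _ => hp t j)
      hsumbound
    refine ⟨fun j => if ENNReal.ofReal (ε ^ 2 * T) < p t j then bmap j else f j, fun i => ?_⟩
    have hsplit : Finset.univ.filter
        (fun j => τ j = t ∧ (if ENNReal.ofReal (ε ^ 2 * T) < p t j then bmap j else f j) = i)
        = (Big.filter (fun j => bmap j = i)) ∪ (Small.filter (fun j => f j = i)) := by
      ext j
      simp only [hBdef, hSdef, Finset.mem_filter, Finset.mem_union, Finset.mem_univ, true_and]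
      by_cases hbig : ENNReal.ofReal (ε ^ 2 * T) < p t j
      · rw [if_pos hbig]
        constructor
        · rintro ⟨h1, h2⟩
          exact Or.inl ⟨⟨h1, hbig⟩, h2⟩
        · rintro (⟨⟨h1, _⟩, h2⟩ | ⟨⟨h1, hc⟩, h2⟩)
          · exact ⟨h1, h2⟩
          · exact absurd hbig (not_lt.mpr hc)
      · rw [if_neg hbig]
        constructor
        · rintro ⟨h1, h2⟩
          exact Or.inr ⟨⟨h1, not_lt.mp hbig⟩, h2⟩
        · rintro (⟨⟨h1, hc⟩, h2⟩ | ⟨⟨h1, _⟩, h2⟩)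
          · exact absurd hc hbig
          · exact ⟨h1, h2⟩
    rw [hsplit, Finset.sum_union ?disj]
    case disj =>
      rw [Finset.disjoint_left]
      intro j hj1 hj2
      simp only [hBdef, Finset.mem_filter] at hj1
      simp only [hSdef, Finset.mem_filter] at hj2
      exact absurd hj1.1.2.2 (not_lt.mpr hj2.1.2.2)
    have hfi := hf i
    rw [← ENNReal.ofReal_add hRpos.le hε2T] at hfi
    exact le_trans (add_le_add_right le_rfl _) hfi
  -- assemble the global schedule
  choose G hG using keyT
  refine ⟨fun j => ⟨τ j, G (τ j) (hmpos j) j⟩, ?_⟩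
  rintro ⟨t, it⟩
  have ht : 0 < m t := it.pos
  unfold load
  refine le_trans (Finset.sum_le_sum_of_subset ?_) (hG t ht it)
  intro j hj
  rw [Finset.filter_congr_decidable] at hj
  obtain ⟨-, hj2⟩ := Finset.mem_filter.mp hj
  have h1 : τ j = t := congrArg Sigma.fst hj2
  refine Finset.mem_filter.mpr ⟨Finset.mem_univ j, h1, ?_⟩
  subst h1
  have h2 := (Sigma.mk.inj_iff.mp hj2).2
  exact eq_of_heq h2
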